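/- arXiv:1009.2120 — 3 statements merged into one kernel-verified Lean document; each statement's English description precedes it below -/
import Mathlib

section
/- For adjacent simple reflections s_i, s_{i+1} of S_{n+1} acting on the polynomial ring R, the Demazure operators satisfy the braid relation ∂_i ∂_{i+1} ∂_i = ∂_{i+1} ∂_i ∂_{i+1}. -/
open MvPolynomial

noncomputable section

/-- The action of the simple transposition `s_i = (i, i+1)` of `S_{n+1}` on the
coordinate ring `k[x_0, …, x_n]` (permutation model of the reflection representation),
permuting the variables. -/
def sAct {k : Type*} [CommRing k] {n : ℕ} (i : Fin n) :
    MvPolynomial (Fin (n + 1)) k →ₐ[k] MvPolynomial (Fin (n + 1)) k :=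
  rename (Equiv.swap i.castSucc i.succ)

/-- The `i`-th simple root `f_i = x_i - x_{i+1}`. -/
def sroot (k : Type*) [CommRing k] {n : ℕ} (i : Fin n) : MvPolynomial (Fin (n + 1)) k :=
  X i.castSucc - X i.succ

/-- Braid relation for three swaps on distinct elements. -/
lemma swap_braid {α : Type*} [DecidableEq α] {u v w : α} (huv : u ≠ v) (hvw : v ≠ w)
    (huw : u ≠ w) (x : α) :
    Equiv.swap u v (Equiv.swap v w (Equiv.swap u v x)) =
      Equiv.swap v w (Equiv.swap u v (Equiv.swap v w x)) := by
  rcases eq_or_ne x u with rfl | hxu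
  · simp [Equiv.swap_apply_left, Equiv.swap_apply_right,
      Equiv.swap_apply_of_ne_of_ne, huv, hvw, huw, huv.symm, hvw.symm, huw.symm]
  rcases eq_or_ne x v with rfl | hxv
  · simp [Equiv.swap_apply_left, Equiv.swap_apply_right,
      Equiv.swap_apply_of_ne_of_ne, huv, hvw, huw, huv.symm, hvw.symm, huw.symm]
  rcases eq_or_ne x w with rfl | hxw
  · simp [Equiv.swap_apply_left, Equiv.swap_apply_right,
      Equiv.swap_apply_of_ne_of_ne, huv, hvw, huw, huv.symm, hvw.symm, huw.symm]
  · simp [Equiv.swap_apply_of_ne_of_ne, hxu, hxv, hxw]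

/-- Abstract computation: if `a * Di P = P - s P` and `b * Dj P = P - t P` with the
usual root data, then `a b c ∂_i∂_j∂_i P` has a symmetric 6-term expression. -/
lemma demazure_aux {R : Type*} [CommRing R] [IsDomain R] (s t : R →+* R)
    (a b c : R) (ha : a ≠ 0) (hc : c = a + b)
    (hsa : s a = -a) (hsb : s b = c) (hta : t a = c)
    (hss : ∀ x, s (s x) = x)
    (Di Dj : R → R) (hDi : ∀ P, a * Di P = P - s P) (hDj : ∀ P, b * Dj P = P - t P)
    (P : R) :
    a * b * c * Di (Dj (Di P)) =
      P - s P - t P + t (s P) + s (t P) - s (t (s P)) := by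
  have hsDi : s (Di P) = Di P := by
    have h1 : s (a * Di P) = s P - s (s P) := by rw [hDi, map_sub]
    rw [hss, map_mul, hsa] at h1
    have h2 : a * s (Di P) = a * Di P := by
      rw [hDi]; linear_combination -h1
    exact mul_left_cancel₀ ha h2
  have htDi : c * t (Di P) = t P - t (s P) := by
    have h1 : t (a * Di P) = t P - t (s P) := by rw [hDi, map_sub]
    rwa [map_mul, hta] at h1
  have hsc : s c = b := by rw [hc, map_add, hsa, hsb, hc]; ring
  have hbcR : b * c * Dj (Di P) = c * Di P - (t P - t (s P)) := by
    calc b * c * Dj (Di P) = c * (b * Dj (Di P)) := by ring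
    _ = c * (Di P - t (Di P)) := by rw [hDj]
    _ = c * Di P - c * t (Di P) := by ring
    _ = c * Di P - (t P - t (s P)) := by rw [htDi]
  have hsbcR : b * c * s (Dj (Di P)) = b * Di P - (s (t P) - s (t (s P))) := by
    have h3 := congrArg s hbcR
    rw [map_mul, map_mul, hsb, hsc, map_sub, map_mul, hsc, hsDi, map_sub] at h3
    linear_combination h3
  calc a * b * c * Di (Dj (Di P)) = b * c * (a * Di (Dj (Di P))) := by ring
  _ = b * c * (Dj (Di P) - s (Dj (Di P))) := by rw [hDi]
  _ = b * c * Dj (Di P) - b * c * s (Dj (Di P)) := by ring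
  _ = (c * Di P - (t P - t (s P))) - (b * Di P - (s (t P) - s (t (s P)))) := by
      rw [hbcR, hsbcR]
  _ = a * Di P - t P + t (s P) + s (t P) - s (t (s P)) := by rw [hc]; ring
  _ = P - s P - t P + t (s P) + s (t P) - s (t (s P)) := by rw [hDi]

/-- For adjacent indices `i` and `j = i + 1`, the Demazure operators satisfy the
braid relation `∂_i ∂_j ∂_i = ∂_j ∂_i ∂_j`. -/
theorem stmt7 {k : Type*} [Field k] (hchar : (2 : k) ≠ 0) {n : ℕ} (i j : Fin n)
    (hadj : (j : ℕ) = (i : ℕ) + 1)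
    (Di Dj : MvPolynomial (Fin (n + 1)) k → MvPolynomial (Fin (n + 1)) k)
    (hDi : ∀ P, sroot k i * Di P = P - sAct i P)
    (hDj : ∀ P, sroot k j * Dj P = P - sAct j P) :
    ∀ P, Di (Dj (Di P)) = Dj (Di (Dj P)) := by
  intro P
  have huv : i.castSucc ≠ i.succ := by
    intro h; have := congrArg Fin.val h
    simp only [Fin.coe_castSucc, Fin.val_succ] at this; omega
  have hvw : i.succ ≠ j.succ := by
    intro h; have := congrArg Fin.val h
    simp only [Fin.val_succ] at this; omega
  have huw : i.castSucc ≠ j.succ := by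
    intro h; have := congrArg Fin.val h
    simp only [Fin.coe_castSucc, Fin.val_succ] at this; omega
  set u := i.castSucc with hu
  set v := i.succ with hv
  set w := j.succ with hw
  have hvj : j.castSucc = v := by
    apply Fin.ext; simp [hadj, hv]
  set a := sroot k i with haa
  set b := sroot k j with hbb
  set c := a + b with hcc
  have hsrj : b = X v - X w := by rw [hbb, sroot, hvj]
  have hcw : c = X u - X w := by rw [hcc, haa, sroot, hsrj]; ring
  -- the ring homs
  set s : MvPolynomial (Fin (n + 1)) k →+* MvPolynomial (Fin (n + 1)) k :=
    (sAct i).toRingHom with hs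
  set t : MvPolynomial (Fin (n + 1)) k →+* MvPolynomial (Fin (n + 1)) k :=
    (sAct j).toRingHom with ht
  have hsapp : ∀ Q, s Q = rename (Equiv.swap u v) Q := fun Q => rfl
  have htapp : ∀ Q, t Q = rename (Equiv.swap v w) Q := by
    intro Q
    show rename (Equiv.swap j.castSucc j.succ) Q = _
    rw [hvj]
  have ha : a ≠ 0 := by
    rw [haa, sroot, sub_ne_zero]
    exact fun h => huv (X_injective h)
  have hb : b ≠ 0 := by
    rw [hsrj, sub_ne_zero]
    exact fun h => hvw (X_injective h)
  have hcne : c ≠ 0 := by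
    rw [hcw, sub_ne_zero]
    exact fun h => huw (X_injective h)
  have hsa : s a = -a := by
    rw [hsapp, haa, sroot, map_sub, rename_X, rename_X, Equiv.swap_apply_left,
      Equiv.swap_apply_right]
    ring
  have hsb : s b = c := by
    rw [hsapp, hsrj, map_sub, rename_X, rename_X, Equiv.swap_apply_right,
      Equiv.swap_apply_of_ne_of_ne (Ne.symm huw) (Ne.symm hvw), hcw]
  have hta : t a = c := by
    rw [htapp, haa, sroot, map_sub, rename_X, rename_X,
      Equiv.swap_apply_of_ne_of_ne huv huw, Equiv.swap_apply_left, hcw]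
  have htb : t b = -b := by
    rw [htapp, hsrj, map_sub, rename_X, rename_X, Equiv.swap_apply_left,
      Equiv.swap_apply_right]
    ring
  have hss : ∀ x, s (s x) = x := by
    intro x
    rw [hsapp, hsapp, rename_rename]
    have : (Equiv.swap u v : Fin (n+1) → Fin (n+1)) ∘ (Equiv.swap u v) = id := by
      funext y; simp [Equiv.swap_apply_self]
    rw [this, rename_id, AlgHom.id_apply]
  have htt : ∀ x, t (t x) = x := by
    intro x
    rw [htapp, htapp, rename_rename]
    have : (Equiv.swap v w : Fin (n+1) → Fin (n+1)) ∘ (Equiv.swap v w) = id := by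
      funext y; simp [Equiv.swap_apply_self]
    rw [this, rename_id, AlgHom.id_apply]
  have hbraid : ∀ x, s (t (s x)) = t (s (t x)) := by
    intro x
    rw [hsapp, htapp, hsapp, htapp, hsapp, htapp, rename_rename, rename_rename,
      rename_rename, rename_rename]
    have hfun : ((⇑(Equiv.swap u v) ∘ ⇑(Equiv.swap v w)) ∘ ⇑(Equiv.swap u v)) =
        ((⇑(Equiv.swap v w) ∘ ⇑(Equiv.swap u v)) ∘ ⇑(Equiv.swap v w)) := by
      funext y
      simp only [Function.comp_apply]
      exact swap_braid huv hvw huw y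
    rw [hfun]
  have hDi' : ∀ Q, a * Di Q = Q - s Q := hDi
  have hDj' : ∀ Q, b * Dj Q = Q - t Q := hDj
  have e1 := demazure_aux s t a b c ha rfl hsa hsb hta hss Di Dj hDi' hDj' P
  have e2 := demazure_aux t s b a c hb (by rw [hcc]; ring) htb hta hsb htt Dj Di hDj' hDi' P
  have key : a * b * c * Di (Dj (Di P)) = a * b * c * Dj (Di (Dj P)) := by
    rw [e1]
    linear_combination -e2 - hbraid P
  exact mul_left_cancel₀ (mul_ne_zero (mul_ne_zero ha hb) hcne) key
end
end

section
/- If s_{i_1}···s_{i_d} and s_{j_1}···s_{j_d} are two reduced expressions of the same element w ∈ S_{n+1}, then the composite Demazure operators agree: ∂_{i_1}∘···∘∂_{i_d} = ∂_{j_1}∘···∘∂_{j_d}. Hence ∂_w is well-defined. -/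
open MvPolynomial

noncomputable section

/-- The `i`-th simple reflection (adjacent transposition) of `S_{n+1}`. -/
def sgen {n : ℕ} (i : Fin n) : Equiv.Perm (Fin (n + 1)) :=
  Equiv.swap i.castSucc i.succ

namespace Stmt8Aux

variable {k : Type*} [Field k] {n : ℕ}

lemma cs_ne_succ (i : Fin n) : i.castSucc ≠ i.succ := (Fin.castSucc_lt_succ (i := i)).ne

lemma adj_ne {i j : Fin n} (hadj : j.castSucc = i.succ) : i ≠ j := by
  intro h; subst h; exact cs_ne_succ i hadj

lemma adj_succ_ne_cs {i j : Fin n} (hadj : j.castSucc = i.succ) : j.succ ≠ i.castSucc := by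
  intro h
  have h1 := congrArg Fin.val h
  have h2 := congrArg Fin.val hadj
  simp [Fin.val_succ] at h1 h2
  omega

lemma adj_succ_ne_succ {i j : Fin n} (hadj : j.castSucc = i.succ) : j.succ ≠ i.succ :=
  fun h => adj_ne hadj (Fin.succ_injective _ h).symm

lemma adj_cs_ne_succ' {i j : Fin n} (hadj : j.castSucc = i.succ) : i.castSucc ≠ j.succ := by
  intro h
  have h1 := congrArg Fin.val h
  have h2 := congrArg Fin.val hadj
  simp [Fin.val_succ] at h1 h2
  omega

lemma dist_cs_ne_cs {i j : Fin n} (hij : i ≠ j) : i.castSucc ≠ j.castSucc :=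
  fun h => hij (Fin.castSucc_injective _ h)
lemma dist_succ_ne_succ {i j : Fin n} (hij : i ≠ j) : i.succ ≠ j.succ :=
  fun h => hij (Fin.succ_injective _ h)

lemma X_sub_X_ne {a b : Fin (n + 1)} (h : a ≠ b) :
    (X a - X b : MvPolynomial (Fin (n + 1)) k) ≠ 0 := fun h0 =>
  h (MvPolynomial.X_injective (sub_eq_zero.mp h0))

lemma sroot_ne (i : Fin n) : sroot k i ≠ 0 := X_sub_X_ne (cs_ne_succ i)

lemma sroot_add_ne {i j : Fin n} (hadj : j.castSucc = i.succ) :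
    sroot k i + sroot k j ≠ 0 := by
  have h : sroot k i + sroot k j = X i.castSucc - X j.succ := by
    rw [sroot, sroot, hadj]; ring
  rw [h]
  exact X_sub_X_ne (adj_cs_ne_succ' hadj)

/-! ### permutation identities -/

lemma sgen_mul_self (i : Fin n) : sgen i * sgen i = 1 := Equiv.swap_mul_self _ _

lemma sgen_braid {i j : Fin n} (hadj : j.castSucc = i.succ) :
    sgen i * sgen j * sgen i = sgen j * sgen i * sgen j := by
  have hab : i.castSucc ≠ i.succ := cs_ne_succ i
  have hac : i.castSucc ≠ j.succ := adj_cs_ne_succ' hadj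
  have hbc : j.castSucc ≠ j.succ := cs_ne_succ j
  unfold sgen
  rw [← hadj] at hab ⊢
  have h1 := Equiv.swap_mul_swap_mul_swap (x := i.castSucc) (y := j.castSucc) (z := j.succ)
    hab hac
  have h2 := Equiv.swap_mul_swap_mul_swap (x := j.succ) (y := j.castSucc) (z := i.castSucc)
    (Ne.symm hbc) (Ne.symm hac)
  rw [Equiv.swap_comm j.castSucc i.castSucc, Equiv.swap_comm j.succ j.castSucc,
    Equiv.swap_comm i.castSucc j.succ] at h2
  rw [h1, h2]

lemma sgen_comm {i j : Fin n} (hij : i ≠ j) (h1 : j.castSucc ≠ i.succ)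
    (h2 : i.castSucc ≠ j.succ) : sgen i * sgen j = sgen j * sgen i := by
  have e1 : sgen j i.castSucc = i.castSucc :=
    Equiv.swap_apply_of_ne_of_ne (dist_cs_ne_cs hij) h2
  have e2 : sgen j i.succ = i.succ :=
    Equiv.swap_apply_of_ne_of_ne (Ne.symm h1) (dist_succ_ne_succ hij)
  have h := Equiv.swap_apply_apply (sgen j) i.castSucc i.succ
  rw [e1, e2] at h
  have h' : (sgen i : Equiv.Perm (Fin (n+1))) = sgen j * sgen i * (sgen j)⁻¹ := h
  calc sgen i * sgen j = sgen j * sgen i * (sgen j)⁻¹ * sgen j := by rw [← h']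
    _ = sgen j * sgen i := by group

/-! ### action identities -/

lemma sAct_eq_rename (i : Fin n) (P : MvPolynomial (Fin (n + 1)) k) :
    sAct i P = rename (⇑(sgen i)) P := rfl

lemma rename_perm_mul (e₁ e₂ : Equiv.Perm (Fin (n + 1))) (P : MvPolynomial (Fin (n + 1)) k) :
    rename (⇑e₁) (rename (⇑e₂) P) = rename (⇑(e₁ * e₂)) P := by
  rw [rename_rename]
  congr 1

lemma sAct_sAct (i : Fin n) (P : MvPolynomial (Fin (n + 1)) k) : sAct i (sAct i P) = P := by
  rw [sAct_eq_rename, sAct_eq_rename, rename_perm_mul, sgen_mul_self]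
  simp [rename_id]

lemma sAct_braid {i j : Fin n} (hadj : j.castSucc = i.succ)
    (P : MvPolynomial (Fin (n + 1)) k) :
    sAct i (sAct j (sAct i P)) = sAct j (sAct i (sAct j P)) := by
  simp only [sAct_eq_rename, rename_perm_mul]
  rw [← mul_assoc, ← mul_assoc, sgen_braid hadj]

lemma sAct_comm {i j : Fin n} (hij : i ≠ j) (h1 : j.castSucc ≠ i.succ)
    (h2 : i.castSucc ≠ j.succ) (P : MvPolynomial (Fin (n + 1)) k) :
    sAct i (sAct j P) = sAct j (sAct i P) := by
  simp only [sAct_eq_rename, rename_perm_mul]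
  rw [sgen_comm hij h1 h2]

lemma sAct_sroot_self (i : Fin n) : sAct i (sroot k i) = - sroot k i := by
  simp only [sAct, sroot, map_sub, rename_X, Equiv.swap_apply_left, Equiv.swap_apply_right]
  ring

/-- `s_i(f_j) = f_i + f_j` for `j = i+1`. -/
lemma sAct_sroot_adj1 {i j : Fin n} (hadj : j.castSucc = i.succ) :
    sAct i (sroot k j) = sroot k i + sroot k j := by
  have hfix : Equiv.swap i.castSucc i.succ j.succ = j.succ :=
    Equiv.swap_apply_of_ne_of_ne (adj_succ_ne_cs hadj) (adj_succ_ne_succ hadj)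
  have hmove : Equiv.swap i.castSucc i.succ j.castSucc = i.castSucc := by
    rw [hadj]; exact Equiv.swap_apply_right _ _
  simp only [sAct, sroot, map_sub, rename_X, hfix, hmove]
  rw [hadj]; ring

/-- `s_j(f_i) = f_i + f_j` for `j = i+1`. -/
lemma sAct_sroot_adj2 {i j : Fin n} (hadj : j.castSucc = i.succ) :
    sAct j (sroot k i) = sroot k i + sroot k j := by
  have hmove : Equiv.swap j.castSucc j.succ i.succ = j.succ := by
    rw [← hadj]; exact Equiv.swap_apply_left _ _
  have hfix : Equiv.swap j.castSucc j.succ i.castSucc = i.castSucc :=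
    Equiv.swap_apply_of_ne_of_ne (dist_cs_ne_cs (adj_ne hadj))
      (adj_cs_ne_succ' hadj)
  simp only [sAct, sroot, map_sub, rename_X, hmove, hfix]
  rw [hadj]; ring

/-- `s_i(f_j) = f_j` when the swaps are disjoint. -/
lemma sAct_sroot_dist {i j : Fin n} (hij : i ≠ j) (h1 : j.castSucc ≠ i.succ)
    (h2 : i.castSucc ≠ j.succ) : sAct i (sroot k j) = sroot k j := by
  simp only [sAct, sroot, map_sub, rename_X,
    Equiv.swap_apply_of_ne_of_ne (Ne.symm (dist_cs_ne_cs hij)) h1,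
    Equiv.swap_apply_of_ne_of_ne (Ne.symm h2) (Ne.symm (dist_succ_ne_succ hij))]

lemma sgen_apply (i : Fin n) (x : Fin (n + 1)) :
    sgen i x = Equiv.swap i.castSucc i.succ x := rfl

lemma swap_lt_swap {i : Fin n} {u v : Fin (n + 1)} (huv : u < v)
    (hne : ¬(u = i.castSucc ∧ v = i.succ)) :
    Equiv.swap i.castSucc i.succ u < Equiv.swap i.castSucc i.succ v := by
  have hab : i.castSucc < i.succ := Fin.castSucc_lt_succ (i := i)
  by_cases hua : u = i.castSucc
  · subst hua
    by_cases hvb : v = i.succ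
    · exact absurd ⟨rfl, hvb⟩ hne
    · rw [Equiv.swap_apply_left, Equiv.swap_apply_of_ne_of_ne (ne_of_gt huv) hvb]
      have h1 : (i : ℕ) < v.val := Fin.lt_def.mp huv
      have h2 : v.val ≠ (i : ℕ) + 1 := fun h => hvb (Fin.ext (by rw [h, Fin.val_succ]))
      exact Fin.lt_def.mpr (by simp only [Fin.val_succ]; omega)
  · by_cases hub : u = i.succ
    · subst hub
      have hvb : v ≠ i.succ := ne_of_gt huv
      have hva : v ≠ i.castSucc := ne_of_gt (hab.trans huv)
      rw [Equiv.swap_apply_right, Equiv.swap_apply_of_ne_of_ne hva hvb]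
      exact hab.trans huv
    · rw [Equiv.swap_apply_of_ne_of_ne hua hub]
      by_cases hva : v = i.castSucc
      · subst hva; rw [Equiv.swap_apply_left]; exact huv.trans hab
      · by_cases hvb : v = i.succ
        · subst hvb; rw [Equiv.swap_apply_right]
          have h1 : u.val < (i : ℕ) + 1 := by
            have := Fin.lt_def.mp huv; simpa [Fin.val_succ] using this
          have h2 : u.val ≠ (i : ℕ) := fun h => hua (Fin.ext (by rw [h]; rfl))
          exact Fin.lt_def.mpr (by simp only [Fin.coe_castSucc]; omega)
        · rw [Equiv.swap_apply_of_ne_of_ne hva hvb]; exact huv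

def invN (w : Equiv.Perm (Fin (n + 1))) : ℕ :=
  (Finset.univ.filter fun p : Fin (n + 1) × Fin (n + 1) => p.1 < p.2 ∧ w p.2 < w p.1).card

lemma invN_one : invN (1 : Equiv.Perm (Fin (n + 1))) = 0 := by
  rw [invN, Finset.card_eq_zero, Finset.filter_eq_empty_iff]
  rintro p -
  rintro ⟨h1, h2⟩
  simp only [Equiv.Perm.coe_one, id_eq] at h2
  exact absurd (h1.trans h2) (lt_irrefl _)

lemma sgen_symm_mul (i : Fin n) (w : Equiv.Perm (Fin (n + 1))) (x : Fin (n + 1)) :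
    (sgen i * w).symm x = w.symm (sgen i x) := by
  show ((sgen i * w)⁻¹ : Equiv.Perm (Fin (n + 1))) x = (w⁻¹ : Equiv.Perm (Fin (n + 1))) (sgen i x)
  rw [mul_inv_rev, Equiv.Perm.mul_apply,
    show (sgen i)⁻¹ = sgen i from Equiv.swap_inv _ _]

lemma invN_asc {i : Fin n} {w : Equiv.Perm (Fin (n + 1))}
    (h : w.symm i.castSucc < w.symm i.succ) :
    invN (sgen i * w) = invN w + 1 := by
  classical
  have hab : i.castSucc < i.succ := Fin.castSucc_lt_succ (i := i)
  set p0 : Fin (n + 1) × Fin (n + 1) := (w.symm i.castSucc, w.symm i.succ) with hp0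
  have hSet : (Finset.univ.filter fun p : Fin (n + 1) × Fin (n + 1) =>
      p.1 < p.2 ∧ (sgen i * w) p.2 < (sgen i * w) p.1)
      = insert p0 (Finset.univ.filter
          fun p : Fin (n + 1) × Fin (n + 1) => p.1 < p.2 ∧ w p.2 < w p.1) := by
    ext ⟨p, q⟩
    rw [Finset.mem_filter, Finset.mem_insert, Finset.mem_filter]
    simp only [Finset.mem_filter, Finset.mem_insert, Finset.mem_univ, true_and,
      Equiv.Perm.mul_apply, hp0, Prod.mk.injEq, sgen_apply]
    constructor
    · rintro ⟨hpq, hlt⟩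
      rcases lt_trichotomy (w q) (w p) with h1 | h1 | h1
      · exact Or.inr ⟨hpq, h1⟩
      · exact absurd (w.injective h1) hpq.ne'
      · by_cases hmem : w p = i.castSucc ∧ w q = i.succ
        · exact Or.inl ⟨by rw [← hmem.1, Equiv.symm_apply_apply],
            by rw [← hmem.2, Equiv.symm_apply_apply]⟩
        · exact absurd hlt (asymm (swap_lt_swap h1 hmem))
    · rintro (⟨hp1, hq1⟩ | ⟨hpq, hlt⟩)
      · subst hp1; subst hq1
        refine ⟨h, ?_⟩
        rw [Equiv.apply_symm_apply, Equiv.apply_symm_apply,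
          Equiv.swap_apply_left, Equiv.swap_apply_right]
        exact hab
      · refine ⟨hpq, ?_⟩
        apply swap_lt_swap hlt
        rintro ⟨h1, h2⟩
        rw [show q = w.symm i.castSucc from by rw [← h1, Equiv.symm_apply_apply],
          show p = w.symm i.succ from by rw [← h2, Equiv.symm_apply_apply]] at hpq
        exact absurd (h.trans hpq) (lt_irrefl _)
  have hnot : p0 ∉ Finset.univ.filter
      fun p : Fin (n + 1) × Fin (n + 1) => p.1 < p.2 ∧ w p.2 < w p.1 := by
    simp only [Finset.mem_filter, Finset.mem_univ, true_and, hp0, Equiv.apply_symm_apply]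
    rintro ⟨-, hc⟩
    exact absurd hc (asymm hab)
  rw [invN, invN, hSet, Finset.card_insert_of_notMem hnot]

lemma invN_desc {i : Fin n} {w : Equiv.Perm (Fin (n + 1))}
    (h : w.symm i.succ < w.symm i.castSucc) :
    invN (sgen i * w) + 1 = invN w := by
  have h2 : (sgen i * w).symm i.castSucc < (sgen i * w).symm i.succ := by
    rw [sgen_symm_mul, sgen_symm_mul, sgen_apply, sgen_apply,
      Equiv.swap_apply_left, Equiv.swap_apply_right]
    exact h
  have h3 := invN_asc h2
  rw [← mul_assoc, sgen_mul_self, one_mul] at h3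
  omega

lemma invN_step (i : Fin n) (w : Equiv.Perm (Fin (n + 1))) :
    invN (sgen i * w) = invN w + 1 ∨ invN (sgen i * w) + 1 = invN w := by
  rcases lt_trichotomy (w.symm i.castSucc) (w.symm i.succ) with h | h | h
  · exact Or.inl (invN_asc h)
  · exact absurd (w.symm.injective h) (Fin.castSucc_lt_succ (i := i)).ne
  · exact Or.inr (invN_desc h)

lemma invN_prod_le (m : List (Fin n)) : invN ((m.map sgen).prod) ≤ m.length := by
  induction m with
  | nil => simp [invN_one]
  | cons a t ih =>
    rw [List.map_cons, List.prod_cons]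
    rcases invN_step a ((t.map sgen).prod) with h | h <;>
      simp only [List.length_cons] <;> omega

lemma exists_desc {w : Equiv.Perm (Fin (n + 1))} (hw : w ≠ 1) :
    ∃ i : Fin n, w.symm i.succ < w.symm i.castSucc := by
  by_contra hno
  push_neg at hno
  have hsm : StrictMono w.symm := by
    rw [Fin.strictMono_iff_lt_succ]
    intro i
    exact lt_of_le_of_ne (hno i)
      (fun hEq => (Fin.castSucc_lt_succ (i := i)).ne (w.symm.injective hEq))
  have hid : ∀ x, w.symm x = x := by
    intro x
    have h1 : StrictMono.orderIsoOfSurjective _ hsm w.symm.surjective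
        = OrderIso.refl (Fin (n + 1)) := Subsingleton.elim _ _
    have h2 := congrArg (fun e => (e : Fin (n+1) ≃o Fin (n+1)) x) h1
    simpa using h2
  have hsymm1 : w⁻¹ = 1 := Equiv.ext fun x => hid x
  exact hw (inv_eq_one.mp hsymm1)

lemma exists_word : ∀ (N : ℕ) (w : Equiv.Perm (Fin (n + 1))), invN w = N →
    ∃ m : List (Fin n), (m.map sgen).prod = w ∧ m.length = N := by
  intro N
  induction N using Nat.strong_induction_on with
  | _ N IH =>
    intro w hw
    by_cases hw1 : w = 1
    · subst hw1
      rw [invN_one] at hw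
      exact ⟨[], by simp, by simp [← hw]⟩
    · obtain ⟨i, hi⟩ := exists_desc hw1
      have hstep := invN_desc hi
      rw [hw] at hstep
      have hlt : invN (sgen i * w) < N := by omega
      obtain ⟨m, hm, hml⟩ := IH _ hlt (sgen i * w) rfl
      refine ⟨i :: m, ?_, ?_⟩
      · rw [List.map_cons, List.prod_cons, hm, ← mul_assoc, sgen_mul_self, one_mul]
      · simp only [List.length_cons, hml]; omega

lemma word_exists_len (w : Equiv.Perm (Fin (n + 1))) :
    ∃ m : List (Fin n), (m.map sgen).prod = w ∧ m.length = invN w :=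
  exists_word (invN w) w rfl

/-- For a reduced word `i :: t` for `w`: the tail is a reduced word for `s_i * w`,
and `i` is a descent of `w`. -/
lemma head_facts {i : Fin n} {t : List (Fin n)} {w : Equiv.Perm (Fin (n + 1))}
    (h : ((i :: t).map sgen).prod = w) (hlen : (i :: t).length = invN w) :
    (t.map sgen).prod = sgen i * w ∧ w.symm i.succ < w.symm i.castSucc ∧
      t.length = invN (sgen i * w) := by
  rw [List.map_cons, List.prod_cons] at h
  have hprod_t : (t.map sgen).prod = sgen i * w := by
    rw [← h, ← mul_assoc, sgen_mul_self, one_mul]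
  have hle : invN (sgen i * w) ≤ t.length := hprod_t ▸ invN_prod_le t
  rw [List.length_cons] at hlen
  rcases lt_trichotomy (w.symm i.castSucc) (w.symm i.succ) with hc | hc | hc
  · have := invN_asc hc; omega
  · exact absurd (w.symm.injective hc) (Fin.castSucc_lt_succ (i := i)).ne
  · have := invN_desc hc
    exact ⟨hprod_t, hc, by omega⟩


/-! ### Demazure operator identities -/

variable {D : Fin n → MvPolynomial (Fin (n + 1)) k → MvPolynomial (Fin (n + 1)) k}
  (hD : ∀ (i : Fin n) P, sroot k i * D i P = P - sAct i P)

include hD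

lemma sAct_D_self (i : Fin n) (P : MvPolynomial (Fin (n + 1)) k) :
    sAct i (D i P) = D i P := by
  have h1 := hD i P
  have h2 := congrArg (fun Q => sAct i Q) h1
  simp only [map_mul, map_sub, sAct_sAct, sAct_sroot_self] at h2
  exact mul_left_cancel₀ (sroot_ne i) (by linear_combination -h1 - h2)

lemma D_comm {i j : Fin n} (hij : i ≠ j) (h1 : j.castSucc ≠ i.succ)
    (h2 : i.castSucc ≠ j.succ) (P : MvPolynomial (Fin (n + 1)) k) :
    D i (D j P) = D j (D i P) := by
  have hq := hD j P
  have hr := hD i (D j P)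
  have hq' := hD i P
  have hr' := hD j (D i P)
  have hqs : sroot k j * sAct i (D j P) = sAct i P - sAct i (sAct j P) := by
    have := congrArg (fun Q => sAct i Q) hq
    simpa only [map_mul, map_sub, sAct_sroot_dist hij h1 h2] using this
  have hqs' : sroot k i * sAct j (D i P) = sAct j P - sAct j (sAct i P) := by
    have := congrArg (fun Q => sAct j Q) hq'
    simpa only [map_mul, map_sub, sAct_sroot_dist (Ne.symm hij) h2 h1] using this
  have hA : (sroot k i * sroot k j) * D i (D j P)
      = P - sAct j P - sAct i P + sAct i (sAct j P) := by
    linear_combination sroot k j * hr + hq - hqs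
  have hB : (sroot k i * sroot k j) * D j (D i P)
      = P - sAct i P - sAct j P + sAct j (sAct i P) := by
    linear_combination sroot k i * hr' + hq' - hqs'
  have hcomm := sAct_comm hij h1 h2 P
  exact mul_left_cancel₀ (mul_ne_zero (sroot_ne i) (sroot_ne j))
    (by linear_combination hA - hB + hcomm)

lemma D_braid {i j : Fin n} (hadj : j.castSucc = i.succ)
    (P : MvPolynomial (Fin (n + 1)) k) :
    D i (D j (D i P)) = D j (D i (D j P)) := by
  set fi := sroot k i with hfi
  set fj := sroot k j with hfj
  -- LHS chain
  have hq : fi * D i P = P - sAct i P := hD i P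
  have hQfix : sAct i (D i P) = D i P := sAct_D_self hD i P
  have hr : fj * D j (D i P) = D i P - sAct j (D i P) := hD j (D i P)
  have hs : fi * D i (D j (D i P)) = D j (D i P) - sAct i (D j (D i P)) := hD i (D j (D i P))
  have hrs : (fi + fj) * sAct i (D j (D i P)) = D i P - sAct i (sAct j (D i P)) := by
    have := congrArg (fun Q => sAct i Q) hr
    simpa only [map_mul, map_sub, hfi, hfj, sAct_sroot_adj1 hadj, hQfix] using this
  have hqt : (fi + fj) * sAct j (D i P) = sAct j P - sAct j (sAct i P) := by
    have := congrArg (fun Q => sAct j Q) hq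
    simpa only [map_mul, map_sub, hfi, hfj, sAct_sroot_adj2 hadj] using this
  have hqst : fj * sAct i (sAct j (D i P)) = sAct i (sAct j P) - sAct i (sAct j (sAct i P)) := by
    have := congrArg (fun Q => sAct i Q) hqt
    have hg : sAct i (fi + fj) = fj := by
      rw [map_add, hfi, hfj, sAct_sroot_self, sAct_sroot_adj1 hadj]; ring
    simpa only [map_mul, map_add, map_sub, hg] using this
  have hbig : (fi * fj * (fi + fj)) * D i (D j (D i P))
      = P - sAct i P - sAct j P + sAct j (sAct i P) + sAct i (sAct j P)
        - sAct i (sAct j (sAct i P)) := by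
    linear_combination fj * (fi + fj) * hs + (fi + fj) * hr - fj * hrs + hq - hqt + hqst
  -- RHS chain (mirror)
  have hq' : fj * D j P = P - sAct j P := hD j P
  have hQfix' : sAct j (D j P) = D j P := sAct_D_self hD j P
  have hr' : fi * D i (D j P) = D j P - sAct i (D j P) := hD i (D j P)
  have hs' : fj * D j (D i (D j P)) = D i (D j P) - sAct j (D i (D j P)) := hD j (D i (D j P))
  have hrs' : (fi + fj) * sAct j (D i (D j P)) = D j P - sAct j (sAct i (D j P)) := by
    have := congrArg (fun Q => sAct j Q) hr'
    simpa only [map_mul, map_sub, hfi, hfj, sAct_sroot_adj2 hadj, hQfix'] using this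
  have hqt' : (fi + fj) * sAct i (D j P) = sAct i P - sAct i (sAct j P) := by
    have := congrArg (fun Q => sAct i Q) hq'
    simpa only [map_mul, map_sub, hfi, hfj, sAct_sroot_adj1 hadj] using this
  have hqst' : fi * sAct j (sAct i (D j P)) = sAct j (sAct i P) - sAct j (sAct i (sAct j P)) := by
    have := congrArg (fun Q => sAct j Q) hqt'
    have hg : sAct j (fi + fj) = fi := by
      rw [map_add, hfi, hfj, sAct_sroot_self, sAct_sroot_adj2 hadj]; ring
    simpa only [map_mul, map_add, map_sub, hg] using this
  have hbig' : (fj * fi * (fi + fj)) * D j (D i (D j P))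
      = P - sAct j P - sAct i P + sAct i (sAct j P) + sAct j (sAct i P)
        - sAct j (sAct i (sAct j P)) := by
    linear_combination fi * (fi + fj) * hs' + (fi + fj) * hr' - fi * hrs' + hq' - hqt' + hqst'
  have hbr := sAct_braid hadj P
  exact mul_left_cancel₀
    (mul_ne_zero (mul_ne_zero (sroot_ne i) (sroot_ne j)) (sroot_add_ne hadj))
    (by linear_combination hbig - hbig' - hbr)


/-! ### main induction -/

lemma adj_case {d : ℕ}
    (IH : ∀ (w : Equiv.Perm (Fin (n + 1))) (l l' : List (Fin n)),
      (l.map sgen).prod = w → (l'.map sgen).prod = w →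
      l.length = invN w → l'.length = invN w → l.length = d →
      (l.map D).foldr (· ∘ ·) id = (l'.map D).foldr (· ∘ ·) id)
    {w : Equiv.Perm (Fin (n + 1))} {i j : Fin n} {t t' : List (Fin n)}
    (hadj : j.castSucc = i.succ)
    (hprod_t : (t.map sgen).prod = sgen i * w)
    (hprod_t' : (t'.map sgen).prod = sgen j * w)
    (hdesc_i : w.symm i.succ < w.symm i.castSucc)
    (hdesc_j : w.symm j.succ < w.symm j.castSucc)
    (hlen_t : t.length = invN (sgen i * w))
    (hlen_t' : t'.length = invN (sgen j * w))
    (hd : t.length = d) :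
    (((i :: t).map D).foldr (· ∘ ·) id) = (((j :: t').map D).foldr (· ∘ ·) id) := by
  have hstep_i := invN_desc hdesc_i
  have hstep_j := invN_desc hdesc_j
  have hw1symm := sgen_symm_mul i w
  -- descent of s_i w at j
  have hd1 : (sgen i * w).symm j.succ < (sgen i * w).symm j.castSucc := by
    rw [hw1symm, hw1symm, hadj, sgen_apply, sgen_apply, Equiv.swap_apply_right,
      Equiv.swap_apply_of_ne_of_ne (adj_succ_ne_cs hadj) (adj_succ_ne_succ hadj)]
    exact lt_trans (hadj ▸ hdesc_j) hdesc_i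
  have hstep2 := invN_desc hd1
  -- descent of s_j s_i w at i
  have hd2 : (sgen j * (sgen i * w)).symm i.succ
      < (sgen j * (sgen i * w)).symm i.castSucc := by
    have e1 : Equiv.swap j.castSucc j.succ i.succ = j.succ := by
      rw [← hadj]; exact Equiv.swap_apply_left _ _
    have e2 : Equiv.swap j.castSucc j.succ i.castSucc = i.castSucc :=
      Equiv.swap_apply_of_ne_of_ne (dist_cs_ne_cs (adj_ne hadj)) (adj_cs_ne_succ' hadj)
    have e3 : Equiv.swap i.castSucc i.succ j.succ = j.succ :=
      Equiv.swap_apply_of_ne_of_ne (adj_succ_ne_cs hadj) (adj_succ_ne_succ hadj)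
    simp only [sgen_symm_mul, sgen_apply, e1, e2, e3, Equiv.swap_apply_left]
    exact hadj ▸ hdesc_j
  have hstep3 := invN_desc hd2
  obtain ⟨u, hu, hul⟩ := word_exists_len (sgen i * (sgen j * (sgen i * w)))
  have hbr := sgen_braid hadj
  have hm1 : ((j :: i :: u).map sgen).prod = sgen i * w := by
    rw [List.map_cons, List.map_cons, List.prod_cons, List.prod_cons, hu]
    calc sgen j * (sgen i * (sgen i * (sgen j * (sgen i * w))))
        = sgen j * ((sgen i * sgen i) * (sgen j * (sgen i * w))) := by
          simp only [mul_assoc]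
      _ = sgen j * (sgen j * (sgen i * w)) := by rw [sgen_mul_self, one_mul]
      _ = (sgen j * sgen j) * (sgen i * w) := by simp only [mul_assoc]
      _ = sgen i * w := by rw [sgen_mul_self, one_mul]
  have hm2 : ((i :: j :: u).map sgen).prod = sgen j * w := by
    rw [List.map_cons, List.map_cons, List.prod_cons, List.prod_cons, hu]
    calc sgen i * (sgen j * (sgen i * (sgen j * (sgen i * w))))
        = (sgen i * sgen j * sgen i) * (sgen j * (sgen i * w)) := by
          simp only [mul_assoc]
      _ = (sgen j * sgen i * sgen j) * (sgen j * (sgen i * w)) := by rw [hbr]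
      _ = sgen j * (sgen i * ((sgen j * sgen j) * (sgen i * w))) := by
          simp only [mul_assoc]
      _ = sgen j * w := by
          rw [sgen_mul_self, one_mul, ← mul_assoc (sgen i) (sgen i) w, sgen_mul_self, one_mul]
  have hm1len : (j :: i :: u).length = invN (sgen i * w) := by
    simp only [List.length_cons, hul]; omega
  have hm2len : (i :: j :: u).length = invN (sgen j * w) := by
    simp only [List.length_cons, hul]; omega
  have hd' : t'.length = d := by omega
  have e1 := IH (sgen i * w) t (j :: i :: u) hprod_t hm1 hlen_t hm1len hd
  have e2 := IH (sgen j * w) t' (i :: j :: u) hprod_t' hm2 hlen_t' hm2len hd'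
  simp only [List.map_cons, List.foldr_cons] at e1 e2 ⊢
  rw [e1, e2]
  funext P
  simp only [Function.comp_apply]
  exact D_braid hD hadj _

lemma dist_case {d : ℕ}
    (IH : ∀ (w : Equiv.Perm (Fin (n + 1))) (l l' : List (Fin n)),
      (l.map sgen).prod = w → (l'.map sgen).prod = w →
      l.length = invN w → l'.length = invN w → l.length = d →
      (l.map D).foldr (· ∘ ·) id = (l'.map D).foldr (· ∘ ·) id)
    {w : Equiv.Perm (Fin (n + 1))} {i j : Fin n} {t t' : List (Fin n)}
    (hij : i ≠ j) (h1 : j.castSucc ≠ i.succ) (h2 : i.castSucc ≠ j.succ)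
    (hprod_t : (t.map sgen).prod = sgen i * w)
    (hprod_t' : (t'.map sgen).prod = sgen j * w)
    (hdesc_i : w.symm i.succ < w.symm i.castSucc)
    (hdesc_j : w.symm j.succ < w.symm j.castSucc)
    (hlen_t : t.length = invN (sgen i * w))
    (hlen_t' : t'.length = invN (sgen j * w))
    (hd : t.length = d) :
    (((i :: t).map D).foldr (· ∘ ·) id) = (((j :: t').map D).foldr (· ∘ ·) id) := by
  have hstep_i := invN_desc hdesc_i
  have hstep_j := invN_desc hdesc_j
  have hw1symm := sgen_symm_mul i w
  have hd1 : (sgen i * w).symm j.succ < (sgen i * w).symm j.castSucc := by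
    rw [hw1symm, hw1symm, sgen_apply, sgen_apply,
      Equiv.swap_apply_of_ne_of_ne (Ne.symm h2) (dist_succ_ne_succ (Ne.symm hij)),
      Equiv.swap_apply_of_ne_of_ne (dist_cs_ne_cs (Ne.symm hij)) h1]
    exact hdesc_j
  have hstep2 := invN_desc hd1
  obtain ⟨u, hu, hul⟩ := word_exists_len (sgen j * (sgen i * w))
  have hcomm := sgen_comm hij h1 h2
  have hm1 : ((j :: u).map sgen).prod = sgen i * w := by
    rw [List.map_cons, List.prod_cons, hu, ← mul_assoc, sgen_mul_self, one_mul]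
  have hm2 : ((i :: u).map sgen).prod = sgen j * w := by
    rw [List.map_cons, List.prod_cons, hu]
    calc sgen i * (sgen j * (sgen i * w))
        = (sgen i * sgen j) * sgen i * w := by simp only [mul_assoc]
      _ = (sgen j * sgen i) * sgen i * w := by rw [hcomm]
      _ = sgen j * w := by
          rw [mul_assoc (sgen j), sgen_mul_self, mul_assoc, one_mul]
  have hm1len : (j :: u).length = invN (sgen i * w) := by
    simp only [List.length_cons, hul]; omega
  have hm2len : (i :: u).length = invN (sgen j * w) := by
    simp only [List.length_cons, hul]; omega
  have hd' : t'.length = d := by omega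
  have e1 := IH (sgen i * w) t (j :: u) hprod_t hm1 hlen_t hm1len hd
  have e2 := IH (sgen j * w) t' (i :: u) hprod_t' hm2 hlen_t' hm2len hd'
  simp only [List.map_cons, List.foldr_cons] at e1 e2 ⊢
  rw [e1, e2]
  funext P
  simp only [Function.comp_apply]
  exact D_comm hD hij h1 h2 _

lemma main_lemma : ∀ (d : ℕ) (w : Equiv.Perm (Fin (n + 1))) (l l' : List (Fin n)),
    (l.map sgen).prod = w → (l'.map sgen).prod = w →
    l.length = invN w → l'.length = invN w → l.length = d →
    (l.map D).foldr (· ∘ ·) id = (l'.map D).foldr (· ∘ ·) id := by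
  intro d
  induction d with
  | zero =>
    intro w l l' hl hl' hlen hlen' hd
    have h1 : l = [] := List.length_eq_zero_iff.mp hd
    have h2 : l' = [] := List.length_eq_zero_iff.mp (by omega)
    rw [h1, h2]
  | succ d IH =>
    intro w l l' hl hl' hlen hlen' hd
    cases l with
    | nil => simp at hd
    | cons i t =>
      cases l' with
      | nil =>
        exfalso
        rw [List.length_cons] at hd hlen
        rw [List.length_nil] at hlen'
        omega
      | cons j t' =>
        obtain ⟨hpt, hdi, hlt⟩ := head_facts hl hlen
        obtain ⟨hpt', hdj, hlt'⟩ := head_facts hl' hlen'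
        have hd1 : t.length = d := by
          rw [List.length_cons] at hd; omega
        by_cases hij : i = j
        · subst hij
          have e := IH (sgen i * w) t t' hpt hpt' hlt hlt' hd1
          simp only [List.map_cons, List.foldr_cons, e]
        · by_cases hadj1 : j.castSucc = i.succ
          · exact adj_case hD IH hadj1 hpt hpt' hdi hdj hlt hlt' hd1
          · by_cases hadj2 : i.castSucc = j.succ
            · have hstep_i := invN_desc hdi
              have hstep_j := invN_desc hdj
              have hd2 : t'.length = d := by omega
              exact (adj_case hD IH hadj2 hpt' hpt hdj hdi hlt' hlt hd2).symm
            · exact dist_case hD IH hij hadj1 hadj2 hpt hpt' hdi hdj hlt hlt' hd1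

end Stmt8Aux

open Stmt8Aux in
/-- If `s_{i₁} ⋯ s_{i_d}` and `s_{j₁} ⋯ s_{j_d}` are two reduced expressions for the
same `w ∈ S_{n+1}`, then the corresponding composites of Demazure operators agree;
hence `∂_w` is well-defined. -/
theorem stmt8 {k : Type*} [Field k] (hchar : (2 : k) ≠ 0) {n : ℕ}
    (D : Fin n → MvPolynomial (Fin (n + 1)) k → MvPolynomial (Fin (n + 1)) k)
    (hD : ∀ (i : Fin n) P, sroot k i * D i P = P - sAct i P)
    (w : Equiv.Perm (Fin (n + 1))) (l l' : List (Fin n))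
    (hl : (l.map sgen).prod = w) (hl' : (l'.map sgen).prod = w)
    (hred : ∀ m : List (Fin n), (m.map sgen).prod = w → l.length ≤ m.length)
    (hred' : ∀ m : List (Fin n), (m.map sgen).prod = w → l'.length ≤ m.length) :
    (l.map D).foldr (· ∘ ·) id = (l'.map D).foldr (· ∘ ·) id := by
  obtain ⟨m, hm, hml⟩ := word_exists_len w
  have hlw : l.length = invN w :=
    le_antisymm (hml ▸ hred m hm) (by rw [← hl]; exact invN_prod_le l)
  have hlw' : l'.length = invN w :=
    le_antisymm (hml ▸ hred' m hm) (by rw [← hl']; exact invN_prod_le l')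
  exact main_lemma hD l.length w l l' hl hl' hlw hlw' rfl
end
end

section
/- In the Hecke algebra H of type A_n, suppose elements b_J (for a parabolic subset J) satisfy b_i b_J = b_J b_i = (v+v^{-1}) b_J for all i ∈ J. Then for J ⊆ K the product b_J b_K equals [J] b_K, where [J] = v^{-ℓ(w_J)} Σ_{w ∈ W_J} v^{2ℓ(w)} is the Hilbert polynomial of the parabolic subgroup W_J. -/
open LaurentPolynomial

noncomputable section

/-- The Coxeter length of a permutation. -/
def len (n : ℕ) (w : Equiv.Perm (Fin (n + 1))) : ℕ :=
  sInf {d | ∃ l : List (Fin n), l.length = d ∧ (l.map sgen).prod = w}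

/-- The parabolic subgroup `W_J ⊆ S_{n+1}`, as a finite set of permutations. -/
def parabolic (n : ℕ) (J : Finset (Fin n)) : Finset (Equiv.Perm (Fin (n + 1))) :=
  (Set.toFinite {w : Equiv.Perm (Fin (n + 1)) |
    w ∈ Subgroup.closure (sgen '' ↑J)}).toFinset

/-- The length `d_J` of the longest element `w_J` of `W_J`. -/
def dlen (n : ℕ) (J : Finset (Fin n)) : ℕ :=
  (parabolic n J).sup (len n)

/-- The Hilbert polynomial `[J] = v^{-ℓ(w_J)} Σ_{w ∈ W_J} v^{2ℓ(w)}` of `W_J`. -/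
def hilbertPoly (n : ℕ) (J : Finset (Fin n)) : LaurentPolynomial ℤ :=
  ∑ w ∈ parabolic n J, T (2 * (len n w : ℤ) - (dlen n J : ℤ))

section Aux

variable {n : ℕ}

/-- number of "cuts" strictly below `x` determined by the complement of `J`. -/
def fcut (J : Finset (Fin n)) (x : Fin (n + 1)) : ℕ :=
  (Finset.univ.filter (fun k : Fin n => (k : ℕ) < (x : ℕ) ∧ k ∉ J)).card

lemma fcut_mono {J : Finset (Fin n)} {x y : Fin (n + 1)} (h : x ≤ y) :
    fcut J x ≤ fcut J y := by
  apply Finset.card_le_card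
  intro k hk
  simp only [Finset.mem_filter, Finset.mem_univ, true_and] at *
  exact ⟨lt_of_lt_of_le hk.1 h, hk.2⟩

lemma lt_of_fcut_lt {J : Finset (Fin n)} {x y : Fin (n + 1)} (h : fcut J x < fcut J y) :
    x < y := by
  by_contra hc
  push_neg at hc
  exact absurd (fcut_mono (J := J) hc) (not_le.2 h)

/-- block preserving permutations -/
def BP (J : Finset (Fin n)) (w : Equiv.Perm (Fin (n + 1))) : Prop :=
  ∀ x, fcut J (w x) = fcut J x

lemma BP.one {J : Finset (Fin n)} : BP J (1 : Equiv.Perm (Fin (n + 1))) := fun _ => rfl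

lemma BP.mul {J : Finset (Fin n)} {u v : Equiv.Perm (Fin (n + 1))} (hu : BP J u)
    (hv : BP J v) : BP J (u * v) := fun x => by
  rw [Equiv.Perm.mul_apply, hu, hv]

lemma BP.inv {J : Finset (Fin n)} {u : Equiv.Perm (Fin (n + 1))} (hu : BP J u) :
    BP J u⁻¹ := fun x => by
  conv_rhs => rw [← (show u (u⁻¹ x) = x from u.apply_symm_apply x), hu]

lemma fcut_succ_of_mem {J : Finset (Fin n)} {i : Fin n} (hi : i ∈ J) :
    fcut J i.succ = fcut J i.castSucc := by
  unfold fcut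
  congr 1
  ext k
  simp only [Finset.mem_filter, Finset.mem_univ, true_and, Fin.val_succ, Fin.coe_castSucc]
  constructor
  · rintro ⟨h1, h2⟩
    refine ⟨?_, h2⟩
    rcases Nat.lt_or_ge (k : ℕ) (i : ℕ) with h | h
    · exact h
    · exfalso; have : (k : ℕ) = (i : ℕ) := by omega
      exact h2 (by rwa [show k = i from Fin.ext this])
  · rintro ⟨h1, h2⟩; exact ⟨by omega, h2⟩

lemma fcut_succ_of_not_mem {J : Finset (Fin n)} {i : Fin n} (hi : i ∉ J) :
    fcut J i.castSucc < fcut J i.succ := by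
  apply Finset.card_lt_card
  rw [Finset.ssubset_iff_of_subset]
  · exact ⟨i, by simp [Fin.val_succ, hi], by simp [Fin.coe_castSucc]⟩
  · intro k hk
    simp only [Finset.mem_filter, Finset.mem_univ, true_and, Fin.coe_castSucc, Fin.val_succ] at *
    exact ⟨by omega, hk.2⟩

lemma BP.lt_of_fcut_ne {J : Finset (Fin n)} {w : Equiv.Perm (Fin (n + 1))} (hw : BP J w)
    {x y : Fin (n + 1)} (hxy : x < y) (hne : fcut J x ≠ fcut J y) : w x < w y := by
  have h1 : fcut J x < fcut J y := lt_of_le_of_ne (fcut_mono hxy.le) hne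
  apply lt_of_fcut_lt (J := J)
  rw [hw, hw]
  exact h1

lemma BP_sgen {J : Finset (Fin n)} {i : Fin n} (hi : i ∈ J) : BP J (sgen i) := by
  intro x
  unfold sgen
  rcases eq_or_ne x i.castSucc with rfl | h1
  · rw [Equiv.swap_apply_left, fcut_succ_of_mem hi]
  rcases eq_or_ne x i.succ with rfl | h2
  · rw [Equiv.swap_apply_right, fcut_succ_of_mem hi]
  · rw [Equiv.swap_apply_of_ne_of_ne h1 h2]

end Aux

section Aux2

variable {n : ℕ}

def invSet (w : Equiv.Perm (Fin (n + 1))) : Finset (Fin (n + 1) × Fin (n + 1)) :=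
  Finset.univ.filter fun p => p.1 < p.2 ∧ w p.2 < w p.1

def invn (w : Equiv.Perm (Fin (n + 1))) : ℕ := (invSet w).card

lemma mem_invSet {w : Equiv.Perm (Fin (n + 1))} {p : Fin (n + 1) × Fin (n + 1)} :
    p ∈ invSet w ↔ p.1 < p.2 ∧ w p.2 < w p.1 := by
  simp [invSet]

lemma invn_one : invn (1 : Equiv.Perm (Fin (n + 1))) = 0 := by
  unfold invn
  rw [Finset.card_eq_zero]
  ext p
  simp only [mem_invSet, Equiv.Perm.one_apply, Finset.notMem_empty, iff_false, not_and]
  intro h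
  exact asymm h

lemma sgen_apply_castSucc (i : Fin n) : sgen i i.castSucc = i.succ :=
  Equiv.swap_apply_left _ _

lemma sgen_apply_succ (i : Fin n) : sgen i i.succ = i.castSucc :=
  Equiv.swap_apply_right _ _

lemma sgen_sgen (i : Fin n) (x : Fin (n + 1)) : sgen i (sgen i x) = x :=
  Equiv.swap_apply_self _ _ _

lemma sgen_sorted {i : Fin n} {x y : Fin (n + 1)} (hxy : x < y)
    (hne : ¬(x = i.castSucc ∧ y = i.succ)) : sgen i x < sgen i y := by
  have hab : i.castSucc < i.succ := (Fin.castSucc_lt_succ (i := i))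
  rcases eq_or_ne x i.castSucc with rfl | hx1
  · have hy1 : y ≠ i.succ := fun hc => hne ⟨rfl, hc⟩
    have hby : i.succ < y := lt_of_le_of_ne (Fin.castSucc_lt_iff_succ_le.1 hxy) (Ne.symm hy1)
    have hy2 : y ≠ i.castSucc := (lt_trans hab hby).ne'
    rw [sgen_apply_castSucc,
      show sgen i y = y from Equiv.swap_apply_of_ne_of_ne hy2 hy1]
    exact hby
  rcases eq_or_ne x i.succ with rfl | hx2
  · have hy2 : y ≠ i.succ := hxy.ne'
    have hy1 : y ≠ i.castSucc := (lt_trans hab hxy).ne'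
    rw [sgen_apply_succ, show sgen i y = y from Equiv.swap_apply_of_ne_of_ne hy1 hy2]
    exact lt_trans hab hxy
  rw [show sgen i x = x from Equiv.swap_apply_of_ne_of_ne hx1 hx2]
  rcases eq_or_ne y i.castSucc with rfl | hy1
  · rw [sgen_apply_castSucc]; exact lt_trans hxy hab
  rcases eq_or_ne y i.succ with rfl | hy2
  · rw [sgen_apply_succ]
    have hle : x ≤ i.castSucc := by
      rw [Fin.le_def]
      rw [Fin.lt_def] at hxy
      simp only [Fin.val_succ, Fin.coe_castSucc] at *
      omega
    exact lt_of_le_of_ne hle hx1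
  · rw [show sgen i y = y from Equiv.swap_apply_of_ne_of_ne hy1 hy2]; exact hxy

lemma sgen_pair_ne {i : Fin n} {x y : Fin (n + 1)} (hxy : x < y) :
    ¬(sgen i x = i.castSucc ∧ sgen i y = i.succ) := by
  rintro ⟨hx, hy⟩
  have h1 : x = i.succ := by
    have := congrArg (sgen i) hx
    rwa [sgen_sgen, sgen_apply_castSucc] at this
  have h2 : y = i.castSucc := by
    have := congrArg (sgen i) hy
    rwa [sgen_sgen, sgen_apply_succ] at this
  rw [h1, h2] at hxy
  exact absurd hxy (asymm ((Fin.castSucc_lt_succ (i := i))))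

lemma invn_card_aux (w : Equiv.Perm (Fin (n + 1))) (i : Fin n) :
    ((invSet (w * sgen i)).erase (i.castSucc, i.succ)).card
      = ((invSet w).erase (i.castSucc, i.succ)).card := by
  apply Finset.card_nbij' (fun p => (sgen i p.1, sgen i p.2)) (fun p => (sgen i p.1, sgen i p.2))
  · intro p hp
    rw [Finset.mem_coe, Finset.mem_erase, mem_invSet] at hp
    obtain ⟨hq, hlt, hinv⟩ := hp
    rw [Finset.mem_coe, Finset.mem_erase, mem_invSet]
    refine ⟨?_, sgen_sorted hlt ?_, ?_⟩
    · intro hc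
      rw [Prod.ext_iff] at hc
      exact sgen_pair_ne hlt ⟨hc.1, hc.2⟩
    · intro hc
      exact hq (Prod.ext hc.1 hc.2)
    · simpa [Equiv.Perm.mul_apply] using hinv
  · intro p hp
    rw [Finset.mem_coe, Finset.mem_erase, mem_invSet] at hp
    obtain ⟨hq, hlt, hinv⟩ := hp
    rw [Finset.mem_coe, Finset.mem_erase, mem_invSet]
    refine ⟨?_, sgen_sorted hlt ?_, ?_⟩
    · intro hc
      rw [Prod.ext_iff] at hc
      exact sgen_pair_ne hlt ⟨hc.1, hc.2⟩
    · intro hc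
      exact hq (Prod.ext hc.1 hc.2)
    · simpa [Equiv.Perm.mul_apply, sgen_sgen] using hinv
  · intro p _; exact Prod.ext (sgen_sgen i p.1) (sgen_sgen i p.2)
  · intro p _; exact Prod.ext (sgen_sgen i p.1) (sgen_sgen i p.2)

lemma q_mem_invSet_mul {w : Equiv.Perm (Fin (n + 1))} {i : Fin n} :
    (i.castSucc, i.succ) ∈ invSet (w * sgen i) ↔ w i.castSucc < w i.succ := by
  simp [mem_invSet, Equiv.Perm.mul_apply, sgen_apply_castSucc, sgen_apply_succ,
    Fin.castSucc_lt_succ]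

lemma q_mem_invSet {w : Equiv.Perm (Fin (n + 1))} {i : Fin n} :
    (i.castSucc, i.succ) ∈ invSet w ↔ w i.succ < w i.castSucc := by
  simp [mem_invSet, Fin.castSucc_lt_succ]

lemma invn_mul_sgen_lt {w : Equiv.Perm (Fin (n + 1))} {i : Fin n}
    (h : w i.castSucc < w i.succ) : invn (w * sgen i) = invn w + 1 := by
  have hq1 : (i.castSucc, i.succ) ∈ invSet (w * sgen i) := q_mem_invSet_mul.2 h
  have hq2 : (i.castSucc, i.succ) ∉ invSet w := fun hc => asymm h (q_mem_invSet.1 hc)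
  have haux := invn_card_aux w i
  rw [Finset.erase_eq_of_notMem hq2] at haux
  calc invn (w * sgen i) = ((invSet (w * sgen i)).erase (i.castSucc, i.succ)).card + 1 :=
        (Finset.card_erase_add_one hq1).symm
    _ = invn w + 1 := by rw [haux]; rfl

lemma invn_mul_sgen_gt {w : Equiv.Perm (Fin (n + 1))} {i : Fin n}
    (h : w i.succ < w i.castSucc) : invn w = invn (w * sgen i) + 1 := by
  have hq1 : (i.castSucc, i.succ) ∈ invSet w := q_mem_invSet.2 h
  have hq2 : (i.castSucc, i.succ) ∉ invSet (w * sgen i) :=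
    fun hc => asymm h (q_mem_invSet_mul.1 hc)
  have haux := invn_card_aux w i
  rw [Finset.erase_eq_of_notMem hq2] at haux
  calc invn w = ((invSet w).erase (i.castSucc, i.succ)).card + 1 :=
        (Finset.card_erase_add_one hq1).symm
    _ = invn (w * sgen i) + 1 := by rw [← haux]; rfl

lemma invn_mul_sgen_le (w : Equiv.Perm (Fin (n + 1))) (i : Fin n) :
    invn (w * sgen i) ≤ invn w + 1 := by
  rcases lt_trichotomy (w i.castSucc) (w i.succ) with h | h | h
  · exact le_of_eq (invn_mul_sgen_lt h)
  · exact absurd (w.injective h) ((Fin.castSucc_lt_succ (i := i))).ne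
  · have := invn_mul_sgen_gt h; omega

end Aux2

section Aux3

variable {n : ℕ}

lemma strictMono_eq_one {w : Equiv.Perm (Fin (n + 1))} (hw : StrictMono w) : w = 1 := by
  have le_apply : ∀ (u : Equiv.Perm (Fin (n + 1))), StrictMono u → ∀ x, x ≤ u x := by
    intro u hu x
    induction x using Fin.induction with
    | zero => exact Fin.zero_le _
    | succ i ih =>
      exact Fin.castSucc_lt_iff_succ_le.1 (lt_of_le_of_lt ih (hu ((Fin.castSucc_lt_succ (i := i)))))
  have hw' : StrictMono (w⁻¹ : Equiv.Perm (Fin (n + 1))) := by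
    intro a b hab
    rcases lt_trichotomy (w⁻¹ a) (w⁻¹ b) with h | h | h
    · exact h
    · exact absurd (congrArg w h) (by simp [hab.ne])
    · have := hw h
      simp only [show ∀ y, w (w⁻¹ y) = y from fun y => w.apply_symm_apply y] at this
      exact absurd this (asymm hab)
  ext x
  have h1 : x ≤ w x := le_apply w hw x
  have h2 : w x ≤ x := by
    simpa using le_apply _ hw' (w x)
  simp [le_antisymm h2 h1]

lemma exists_descent {w : Equiv.Perm (Fin (n + 1))} (hw : w ≠ 1) :
    ∃ i : Fin n, w i.succ < w i.castSucc := by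
  by_contra h
  push_neg at h
  apply hw
  apply strictMono_eq_one
  rw [Fin.strictMono_iff_lt_succ]
  intro i
  exact lt_of_le_of_ne (h i) (w.injective.ne_iff.2 ((Fin.castSucc_lt_succ (i := i))).ne)

lemma eq_one_of_invn_eq_zero {w : Equiv.Perm (Fin (n + 1))} (h : invn w = 0) : w = 1 := by
  by_contra hw
  obtain ⟨i, hi⟩ := exists_descent hw
  have : (i.castSucc, i.succ) ∈ invSet w := q_mem_invSet.2 hi
  have := Finset.card_ne_zero_of_mem this
  exact this h

lemma descent_mem {J : Finset (Fin n)} {w : Equiv.Perm (Fin (n + 1))} (hw : BP J w)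
    {i : Fin n} (hi : w i.succ < w i.castSucc) : i ∈ J := by
  by_contra hiJ
  have h1 : fcut J i.castSucc ≠ fcut J i.succ := (fcut_succ_of_not_mem hiJ).ne
  have := hw.lt_of_fcut_ne ((Fin.castSucc_lt_succ (i := i))) h1
  exact asymm hi this

lemma exists_word (J : Finset (Fin n)) : ∀ (d : ℕ) (w : Equiv.Perm (Fin (n + 1))),
    invn w = d → BP J w →
    ∃ l : List (Fin n), (∀ i ∈ l, i ∈ J) ∧ l.length = d ∧ (l.map sgen).prod = w := by
  intro d
  induction d with
  | zero =>
    intro w h _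
    exact ⟨[], by simp, by simp, by simp [eq_one_of_invn_eq_zero h]⟩
  | succ d ih =>
    intro w h hw
    have hne : w ≠ 1 := by
      intro hc; rw [hc, invn_one] at h; omega
    obtain ⟨i, hi⟩ := exists_descent hne
    have hiJ : i ∈ J := descent_mem hw hi
    set w' := w * sgen i with hw'def
    have hww' : w' * sgen i = w := by
      rw [hw'def, mul_assoc]
      unfold sgen
      rw [Equiv.swap_mul_self, mul_one]
    have h1 : w' i.castSucc < w' i.succ := by
      have e1 : w' i.castSucc = w i.succ := by
        rw [hw'def, Equiv.Perm.mul_apply, sgen_apply_castSucc]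
      have e2 : w' i.succ = w i.castSucc := by
        rw [hw'def, Equiv.Perm.mul_apply, sgen_apply_succ]
      rw [e1, e2]; exact hi
    have hinv' : invn w' = d := by
      have := invn_mul_sgen_lt h1
      rw [hww'] at this
      omega
    have hBP' : BP J w' := hw.mul (BP_sgen hiJ)
    obtain ⟨l', hl'J, hl'len, hl'prod⟩ := ih w' hinv' hBP'
    refine ⟨l' ++ [i], ?_, by simp [hl'len], ?_⟩
    · intro j hj
      rcases List.mem_append.1 hj with hj | hj
      · exact hl'J j hj
      · rw [List.mem_singleton.1 hj]; exact hiJ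
    · rw [List.map_append, List.prod_append]
      simp [hl'prod, hww']

lemma BP_univ (w : Equiv.Perm (Fin (n + 1))) : BP Finset.univ w := by
  intro x
  unfold fcut
  simp

lemma invn_le_word : ∀ l : List (Fin n), invn ((l.map sgen).prod) ≤ l.length := by
  intro l
  induction l using List.reverseRecOn with
  | nil => simp [invn_one]
  | append_singleton l i ih =>
    rw [List.map_append, List.prod_append]
    simp only [List.map_cons, List.map_nil, List.prod_cons, List.prod_nil, mul_one,
      List.length_append, List.length_singleton]
    calc invn ((l.map sgen).prod * sgen i) ≤ invn ((l.map sgen).prod) + 1 :=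
          invn_mul_sgen_le _ _
      _ ≤ l.length + 1 := by omega

lemma len_eq_invn (w : Equiv.Perm (Fin (n + 1))) : len n w = invn w := by
  obtain ⟨l, _, hlen, hprod⟩ := exists_word Finset.univ (invn w) w rfl (BP_univ w)
  have hmem : invn w ∈ {d | ∃ l : List (Fin n), l.length = d ∧ (l.map sgen).prod = w} :=
    ⟨l, hlen, hprod⟩
  apply le_antisymm
  · exact Nat.sInf_le hmem
  · have hmem2 := Nat.sInf_mem (Set.nonempty_of_mem hmem)
    obtain ⟨l', hl'len, hl'prod⟩ := hmem2
    calc invn w = invn ((l'.map sgen).prod) := by rw [hl'prod]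
      _ ≤ l'.length := invn_le_word l'
      _ = len n w := hl'len

def BPsub (J : Finset (Fin n)) : Subgroup (Equiv.Perm (Fin (n + 1))) where
  carrier := {w | BP J w}
  one_mem' := BP.one
  mul_mem' := fun hu hv => hu.mul hv
  inv_mem' := fun hu => hu.inv

lemma mem_parabolic {J : Finset (Fin n)} {w : Equiv.Perm (Fin (n + 1))} :
    w ∈ parabolic n J ↔ BP J w := by
  unfold parabolic
  rw [Set.Finite.mem_toFinset, Set.mem_setOf_eq]
  constructor
  · intro h
    have hle : Subgroup.closure (sgen '' (J : Set (Fin n))) ≤ BPsub J := by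
      rw [Subgroup.closure_le]
      rintro x ⟨i, hiJ, rfl⟩
      exact BP_sgen hiJ
    exact hle h
  · intro h
    obtain ⟨l, hlJ, _, hlprod⟩ := exists_word J (invn w) w rfl h
    rw [← hlprod]
    apply Subgroup.list_prod_mem
    intro x hx
    rw [List.mem_map] at hx
    obtain ⟨i, hil, rfl⟩ := hx
    exact Subgroup.subset_closure ⟨i, hlJ i hil, rfl⟩

end Aux3

section Aux4

variable {n : ℕ}

def bpairs (J : Finset (Fin n)) : Finset (Fin (n + 1) × Fin (n + 1)) :=
  Finset.univ.filter fun p => p.1 < p.2 ∧ fcut J p.1 = fcut J p.2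

lemma mem_bpairs {J : Finset (Fin n)} {p : Fin (n + 1) × Fin (n + 1)} :
    p ∈ bpairs J ↔ p.1 < p.2 ∧ fcut J p.1 = fcut J p.2 := by simp [bpairs]

lemma invSet_subset_bpairs {J : Finset (Fin n)} {w : Equiv.Perm (Fin (n + 1))}
    (hw : BP J w) : invSet w ⊆ bpairs J := by
  intro p hp
  rw [mem_invSet] at hp
  rw [mem_bpairs]
  refine ⟨hp.1, ?_⟩
  by_contra hne
  exact asymm hp.2 (hw.lt_of_fcut_ne hp.1 hne)

/-- the block of `x`. -/
def blk (J : Finset (Fin n)) (x : Fin (n + 1)) : Finset (Fin (n + 1)) :=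
  Finset.univ.filter fun y => fcut J y = fcut J x

lemma blk_nonempty (J : Finset (Fin n)) (x : Fin (n + 1)) : (blk J x).Nonempty :=
  ⟨x, by simp [blk]⟩

def mm (J : Finset (Fin n)) (x : Fin (n + 1)) : Fin (n + 1) :=
  (blk J x).min' (blk_nonempty J x)

def MM (J : Finset (Fin n)) (x : Fin (n + 1)) : Fin (n + 1) :=
  (blk J x).max' (blk_nonempty J x)

lemma mm_le (J : Finset (Fin n)) (x : Fin (n + 1)) : mm J x ≤ x :=
  Finset.min'_le _ _ (by simp [blk])

lemma le_MM (J : Finset (Fin n)) (x : Fin (n + 1)) : x ≤ MM J x :=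
  Finset.le_max' _ _ (by simp [blk])

lemma fcut_mm (J : Finset (Fin n)) (x : Fin (n + 1)) : fcut J (mm J x) = fcut J x := by
  have := (blk J x).min'_mem (blk_nonempty J x)
  exact (Finset.mem_filter.1 this).2

lemma fcut_MM (J : Finset (Fin n)) (x : Fin (n + 1)) : fcut J (MM J x) = fcut J x := by
  have := (blk J x).max'_mem (blk_nonempty J x)
  exact (Finset.mem_filter.1 this).2

lemma fcut_between {J : Finset (Fin n)} {x y : Fin (n + 1)} (h1 : mm J x ≤ y)
    (h2 : y ≤ MM J x) : fcut J y = fcut J x := by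
  have a1 := fcut_mono (J := J) h1
  have a2 := fcut_mono (J := J) h2
  rw [fcut_mm] at a1
  rw [fcut_MM] at a2
  omega

/-- blockwise reversal -/
def grev (J : Finset (Fin n)) (x : Fin (n + 1)) : Fin (n + 1) :=
  ⟨(mm J x : ℕ) + (MM J x : ℕ) - (x : ℕ), by
    have h1 : (mm J x : ℕ) ≤ (x : ℕ) := mm_le J x
    have h2 : (MM J x : ℕ) < n + 1 := (MM J x).isLt
    omega⟩

lemma grev_bounds (J : Finset (Fin n)) (x : Fin (n + 1)) :
    mm J x ≤ grev J x ∧ grev J x ≤ MM J x := by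
  have h1 : (mm J x : ℕ) ≤ (x : ℕ) := mm_le J x
  have h2 : (x : ℕ) ≤ (MM J x : ℕ) := le_MM J x
  constructor <;> rw [Fin.le_def] <;> simp only [grev] <;> omega

lemma fcut_grev (J : Finset (Fin n)) (x : Fin (n + 1)) : fcut J (grev J x) = fcut J x :=
  fcut_between (grev_bounds J x).1 (grev_bounds J x).2

lemma blk_grev (J : Finset (Fin n)) (x : Fin (n + 1)) : blk J (grev J x) = blk J x := by
  unfold blk
  simp only [fcut_grev]

lemma grev_involutive (J : Finset (Fin n)) : Function.Involutive (grev J) := by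
  intro x
  have hb := blk_grev J x
  have hmm : mm J (grev J x) = mm J x := by unfold mm; congr 1
  have hMM : MM J (grev J x) = MM J x := by unfold MM; congr 1
  have h1 : (mm J x : ℕ) ≤ (x : ℕ) := mm_le J x
  have h2 : (x : ℕ) ≤ (MM J x : ℕ) := le_MM J x
  apply Fin.ext
  rw [show (grev J (grev J x) : ℕ)
      = (mm J (grev J x) : ℕ) + (MM J (grev J x) : ℕ) - (grev J x : ℕ) from rfl,
    hmm, hMM, show ((grev J x) : ℕ) = (mm J x : ℕ) + (MM J x : ℕ) - (x : ℕ) from rfl]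
  omega

/-- the longest element of the parabolic -/
def w0 (J : Finset (Fin n)) : Equiv.Perm (Fin (n + 1)) :=
  (grev_involutive J).toPerm

lemma w0_apply (J : Finset (Fin n)) (x : Fin (n + 1)) : w0 J x = grev J x := rfl

lemma BP_w0 (J : Finset (Fin n)) : BP J (w0 J) := fun x => fcut_grev J x

lemma w0_mul_w0 (J : Finset (Fin n)) : w0 J * w0 J = 1 := by
  ext x
  simp only [Equiv.Perm.mul_apply, Equiv.Perm.one_apply, w0_apply]
  rw [grev_involutive J x]

lemma grev_reverses {J : Finset (Fin n)} {x y : Fin (n + 1)} (hxy : x < y)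
    (hf : fcut J x = fcut J y) : grev J y < grev J x := by
  have hblk : blk J y = blk J x := by unfold blk; simp only [hf]
  have hmm : mm J y = mm J x := by unfold mm; congr 1
  have hMM : MM J y = MM J x := by unfold MM; congr 1
  have h1 : (mm J x : ℕ) ≤ (x : ℕ) := mm_le J x
  have h2 : (y : ℕ) ≤ (MM J y : ℕ) := le_MM J y
  rw [hMM] at h2
  rw [Fin.lt_def] at hxy ⊢
  simp only [grev, hmm, hMM]
  omega

lemma invn_mul_w0 {J : Finset (Fin n)} {w : Equiv.Perm (Fin (n + 1))} (hw : BP J w) :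
    invn (w * w0 J) + invn w = (bpairs J).card := by
  have hww0 : BP J (w * w0 J) := hw.mul (BP_w0 J)
  have key : invn (w * w0 J) = ((bpairs J) \ invSet w).card := by
    apply Finset.card_nbij' (fun p => (w0 J p.2, w0 J p.1)) (fun p => (w0 J p.2, w0 J p.1))
    · intro p hp
      have hpb := invSet_subset_bpairs hww0 hp
      rw [Finset.mem_coe, mem_invSet] at hp
      rw [mem_bpairs] at hpb
      rw [Finset.mem_coe, Finset.mem_sdiff, mem_bpairs, mem_invSet]
      have hrev : w0 J p.2 < w0 J p.1 := grev_reverses hp.1 hpb.2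
      refine ⟨⟨hrev, ?_⟩, ?_⟩
      · simp only [w0_apply, fcut_grev]
        exact hpb.2.symm
      · simp only [not_and, not_lt]
        intro _
        have := hp.2
        simp only [Equiv.Perm.mul_apply, w0_apply] at this
        exact this.le
    · intro p hp
      rw [Finset.mem_coe, Finset.mem_sdiff, mem_bpairs, mem_invSet] at hp
      obtain ⟨⟨hlt, hf⟩, hni⟩ := hp
      rw [Finset.mem_coe, mem_invSet]
      have hwlt : w p.1 < w p.2 := by
        rcases lt_trichotomy (w p.1) (w p.2) with h | h | h
        · exact h
        · exact absurd (w.injective h) hlt.ne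
        · exact absurd ⟨hlt, h⟩ hni
      have hrev : w0 J p.2 < w0 J p.1 := grev_reverses hlt hf
      refine ⟨hrev, ?_⟩
      simp only [Equiv.Perm.mul_apply, w0_apply]
      rw [grev_involutive J p.1, grev_involutive J p.2]
      exact hwlt
    · intro p _
      simp only [w0_apply]
      exact Prod.ext (grev_involutive J _) (grev_involutive J _)
    · intro p _
      simp only [w0_apply]
      exact Prod.ext (grev_involutive J _) (grev_involutive J _)
  rw [key]
  exact Finset.card_sdiff_add_card_eq_card (invSet_subset_bpairs hw)

end Aux4

section Aux5

variable {n : ℕ}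

lemma invn_w0 (J : Finset (Fin n)) : invn (w0 J) = (bpairs J).card := by
  have h := invn_mul_w0 (J := J) BP.one
  rwa [one_mul, invn_one, add_zero] at h

lemma w0_mem_parabolic (J : Finset (Fin n)) : w0 J ∈ parabolic n J :=
  mem_parabolic.2 (BP_w0 J)

lemma dlen_eq (J : Finset (Fin n)) : dlen n J = (bpairs J).card := by
  apply le_antisymm
  · apply Finset.sup_le
    intro w hw
    rw [len_eq_invn]
    exact Finset.card_le_card (invSet_subset_bpairs (mem_parabolic.1 hw))
  · have h := Finset.le_sup (f := len n) (w0_mem_parabolic J)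
    rwa [len_eq_invn, invn_w0] at h

lemma sum_palindrome (J : Finset (Fin n)) :
    ∑ w ∈ parabolic n J, T ((dlen n J : ℤ) - 2 * (len n w : ℤ)) = hilbertPoly n J := by
  unfold hilbertPoly
  apply Finset.sum_nbij' (fun w => w * w0 J) (fun w => w * w0 J)
  · intro w hw
    exact mem_parabolic.2 ((mem_parabolic.1 hw).mul (BP_w0 J))
  · intro w hw
    exact mem_parabolic.2 ((mem_parabolic.1 hw).mul (BP_w0 J))
  · intro w _; rw [mul_assoc, w0_mul_w0, mul_one]
  · intro w _; rw [mul_assoc, w0_mul_w0, mul_one]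
  · intro w hw
    have hBP := mem_parabolic.1 hw
    have hc := invn_mul_w0 hBP
    rw [len_eq_invn, len_eq_invn, dlen_eq]
    congr 1
    omega

end Aux5


/-- In the Hecke algebra of type `A_n`: if `b_J` is the Kazhdan–Lusztig basis element
of the longest element of `W_J` (expanded in the standard basis `H_w`, `w ∈ W_J`, as
`b_J = Σ_w v^{d_J - ℓ(w)} H_w`), and `b_K` absorbs each generator `b_i`, `i ∈ K`, as
`b_i b_K = b_K b_i = (v + v⁻¹) b_K`, then for `J ⊆ K` one has `b_J b_K = [J]·b_K`,
where `[J]` is the Hilbert polynomial of `W_J`. -/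
theorem stmt11 (n : ℕ) (A : Type*) [Ring A] [Algebra (LaurentPolynomial ℤ) A]
    (b : Fin n → A)
    (hquad : ∀ i : Fin n,
      b i * b i = algebraMap (LaurentPolynomial ℤ) A (T 1 + T (-1)) * b i)
    (hcomm : ∀ i j : Fin n, 2 ≤ |(i : ℤ) - (j : ℤ)| → b i * b j = b j * b i)
    (hbraid : ∀ i j : Fin n, |(i : ℤ) - (j : ℤ)| = 1 →
      b i * b j * b i + b j = b j * b i * b j + b i)
    (J K : Finset (Fin n)) (hJK : J ⊆ K)
    (bJ bK : A)
    (Hstd : Equiv.Perm (Fin (n + 1)) → A)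
    (hH1 : Hstd 1 = 1)
    (hHmul : ∀ (w : Equiv.Perm (Fin (n + 1))) (i : Fin n),
      len n (w * sgen i) = len n w + 1 →
      Hstd (w * sgen i) = Hstd w * (b i - algebraMap (LaurentPolynomial ℤ) A (T 1)))
    (hbJ : bJ = ∑ w ∈ parabolic n J,
      algebraMap (LaurentPolynomial ℤ) A (T ((dlen n J : ℤ) - (len n w : ℤ))) * Hstd w)
    (hbK : ∀ i ∈ K,
      b i * bK = algebraMap (LaurentPolynomial ℤ) A (T 1 + T (-1)) * bK ∧
      bK * b i = algebraMap (LaurentPolynomial ℤ) A (T 1 + T (-1)) * bK) :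
    bJ * bK = algebraMap (LaurentPolynomial ℤ) A (hilbertPoly n J) * bK := by
  have key : ∀ (d : ℕ) (w : Equiv.Perm (Fin (n + 1))), invn w = d → BP J w →
      Hstd w * bK = algebraMap (LaurentPolynomial ℤ) A (T (-(d : ℤ))) * bK := by
    intro d
    induction d with
    | zero =>
      intro w h _
      rw [eq_one_of_invn_eq_zero h, hH1, one_mul]
      simp
    | succ d ih =>
      intro w h hw
      have hne : w ≠ 1 := by intro hc; rw [hc, invn_one] at h; omega
      obtain ⟨i, hi⟩ := exists_descent hne
      have hiJ : i ∈ J := descent_mem hw hi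
      set w' := w * sgen i with hw'def
      have hww' : w' * sgen i = w := by
        rw [hw'def, mul_assoc]
        unfold sgen
        rw [Equiv.swap_mul_self, mul_one]
      have h1 : w' i.castSucc < w' i.succ := by
        have e1 : w' i.castSucc = w i.succ := by
          rw [hw'def, Equiv.Perm.mul_apply, sgen_apply_castSucc]
        have e2 : w' i.succ = w i.castSucc := by
          rw [hw'def, Equiv.Perm.mul_apply, sgen_apply_succ]
        rw [e1, e2]; exact hi
      have hinv' : invn w' = d := by
        have := invn_mul_sgen_lt h1
        rw [hww'] at this
        omega
      have hBP' : BP J w' := hw.mul (BP_sgen hiJ)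
      have hlen : len n (w' * sgen i) = len n w' + 1 := by
        rw [len_eq_invn, len_eq_invn, hww', h, hinv']
      have hH : Hstd w = Hstd w' * (b i - algebraMap (LaurentPolynomial ℤ) A (T 1)) := by
        rw [← hww']
        exact hHmul w' i hlen
      have habs := (hbK i (hJK hiJ)).1
      have step : (b i - algebraMap (LaurentPolynomial ℤ) A (T 1)) * bK
          = algebraMap (LaurentPolynomial ℤ) A (T (-1)) * bK := by
        rw [sub_mul, habs, map_add, add_mul, add_sub_cancel_left]
      have hcast : (-1 + -(d : ℤ)) = -(((d + 1 : ℕ)) : ℤ) := by push_cast; ring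
      calc Hstd w * bK
          = Hstd w' * ((b i - algebraMap (LaurentPolynomial ℤ) A (T 1)) * bK) := by
            rw [hH, mul_assoc]
        _ = Hstd w' * (algebraMap (LaurentPolynomial ℤ) A (T (-1)) * bK) := by rw [step]
        _ = algebraMap (LaurentPolynomial ℤ) A (T (-1)) * (Hstd w' * bK) := by
            rw [← mul_assoc, ← Algebra.commutes, mul_assoc]
        _ = algebraMap (LaurentPolynomial ℤ) A (T (-1)) *
              (algebraMap (LaurentPolynomial ℤ) A (T (-(d : ℤ))) * bK) := by
            rw [ih w' hinv' hBP']
        _ = algebraMap (LaurentPolynomial ℤ) A (T (-(((d + 1 : ℕ)) : ℤ))) * bK := by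
            rw [← mul_assoc, ← map_mul, ← T_add, hcast]
  have hterm : ∀ w ∈ parabolic n J,
      algebraMap (LaurentPolynomial ℤ) A (T ((dlen n J : ℤ) - (len n w : ℤ))) * Hstd w * bK
        = algebraMap (LaurentPolynomial ℤ) A (T ((dlen n J : ℤ) - 2 * (len n w : ℤ))) * bK := by
    intro w hw
    rw [mul_assoc, key (invn w) w rfl (mem_parabolic.1 hw), ← mul_assoc, ← map_mul, ← T_add]
    congr 2
    rw [len_eq_invn]
    ring
  rw [hbJ, Finset.sum_mul, Finset.sum_congr rfl hterm, ← Finset.sum_mul, ← map_sum,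
    sum_palindrome]
end
end
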